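/- arXiv:2605.16836 — 7 statements merged into one kernel-verified Lean document; each statement's English description precedes it below -/
import Mathlib

section
/- Let (Ω, F, q) be a probability space and λ : Ω → ℝ a random variable with λ > 0 almost surely, λ integrable, log λ integrable, and log(1 − exp(−λ)) integrable. Then E_q[ log(1 − exp(−λ)) ] ≥ −E_q[λ] + log( exp(exp(E_q[log λ])) − 1 ). Moreover, equality holds when λ is almost surely constant. -/
open MeasureTheory Real

lemma aux_log_one_sub_exp_neg (x : ℝ) (hx : 0 < x) :
    Real.log (1 - Real.exp (-x)) = -x + Real.log (Real.exp x - 1) := by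
  have hlt : (1 : ℝ) < Real.exp x := by
    have := Real.add_one_lt_exp (ne_of_gt hx); linarith
  have h1 : 1 - Real.exp (-x) = (Real.exp x - 1) * Real.exp (-x) := by
    rw [sub_mul, ← Real.exp_add]; simp
  rw [h1, Real.log_mul (by linarith) (Real.exp_ne_zero _), Real.log_exp]
  ring

/-- The function `φ x = x * exp x / (exp x - 1)` has positive derivative on `(0, ∞)`. -/
lemma aux_phi_hasDeriv (x : ℝ) (hx : 0 < x) :
    HasDerivAt (fun y => y * Real.exp y / (Real.exp y - 1))
      ((( 1 * Real.exp x + x * Real.exp x) * (Real.exp x - 1)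
        - x * Real.exp x * Real.exp x) / (Real.exp x - 1) ^ 2) x := by
  have hlt : (1 : ℝ) < Real.exp x := by
    have := Real.add_one_lt_exp (ne_of_gt hx); linarith
  exact ((hasDerivAt_id x).mul (Real.hasDerivAt_exp x)).div
    ((Real.hasDerivAt_exp x).sub_const 1) (by linarith)

lemma aux_phi_mono : MonotoneOn (fun y => y * Real.exp y / (Real.exp y - 1)) (Set.Ioi 0) := by
  have hcont : ContinuousOn (fun y => y * Real.exp y / (Real.exp y - 1)) (Set.Ioi 0) := by
    apply ContinuousOn.div
    · exact (continuous_id.mul Real.continuous_exp).continuousOn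
    · exact (Real.continuous_exp.sub continuous_const).continuousOn
    · intro x hx
      have hx' : 0 < x := Set.mem_Ioi.mp hx
      have : (1 : ℝ) < Real.exp x := by
        have := Real.add_one_lt_exp (ne_of_gt hx'); linarith
      linarith
  have := StrictMonoOn.monotoneOn (f := fun y => y * Real.exp y / (Real.exp y - 1))
      (s := Set.Ioi 0) ?_
  · exact this
  · apply strictMonoOn_of_deriv_pos (convex_Ioi 0) hcont
    intro x hx
    rw [interior_Ioi] at hx
    have hx' : 0 < x := hx
    have hlt : 1 + x < Real.exp x := by
      have := Real.add_one_lt_exp (ne_of_gt hx'); linarith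
    rw [(aux_phi_hasDeriv x hx').deriv]
    apply div_pos
    · nlinarith [Real.exp_pos x]
    · nlinarith

/-- `g t = log (exp (exp t) - 1)` and its derivative. -/
lemma aux_g_hasDeriv (t : ℝ) :
    HasDerivAt (fun t => Real.log (Real.exp (Real.exp t) - 1))
      (Real.exp t * Real.exp (Real.exp t) / (Real.exp (Real.exp t) - 1)) t := by
  have hlt : (1 : ℝ) < Real.exp (Real.exp t) := by
    have h0 := Real.exp_pos t
    have := Real.add_one_lt_exp (ne_of_gt h0); linarith
  have h1 : HasDerivAt (fun t => Real.exp (Real.exp t) - 1)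
      (Real.exp (Real.exp t) * Real.exp t) t :=
    (((Real.hasDerivAt_exp (Real.exp t)).comp t (Real.hasDerivAt_exp t))).sub_const 1
  have := h1.log (by linarith)
  convert this using 1
  ring

lemma aux_g_convex : ConvexOn ℝ Set.univ (fun t => Real.log (Real.exp (Real.exp t) - 1)) := by
  have hdiff : ∀ t : ℝ, DifferentiableAt ℝ (fun t => Real.log (Real.exp (Real.exp t) - 1)) t :=
    fun t => (aux_g_hasDeriv t).differentiableAt
  have hderiv : ∀ t : ℝ, deriv (fun t => Real.log (Real.exp (Real.exp t) - 1)) t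
      = (fun y => y * Real.exp y / (Real.exp y - 1)) (Real.exp t) := by
    intro t
    rw [(aux_g_hasDeriv t).deriv]
  have hdiff' : Differentiable ℝ (fun t => Real.log (Real.exp (Real.exp t) - 1)) :=
    fun t => hdiff t
  apply MonotoneOn.convexOn_of_deriv convex_univ
  · exact hdiff'.continuous.continuousOn
  · intro t _
    exact (hdiff t).differentiableWithinAt
  · intro a _ b _ hab
    rw [interior_univ] at *
    rw [hderiv a, hderiv b]
    exact aux_phi_mono (Set.mem_Ioi.mpr (Real.exp_pos a)) (Set.mem_Ioi.mpr (Real.exp_pos b))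
      (Real.exp_le_exp.mpr hab)

/-- Lower bound for `E[log(1 - exp(-λ))]`, with equality in the a.s. constant case. -/
theorem expected_log_one_sub_exp_neg_lower_bound
    {Ω : Type*} [MeasurableSpace Ω] (q : Measure Ω) [IsProbabilityMeasure q]
    (lam : Ω → ℝ)
    (hpos : ∀ᵐ ω ∂q, 0 < lam ω)
    (hint : Integrable lam q)
    (hlogint : Integrable (fun ω => Real.log (lam ω)) q)
    (hloglink : Integrable (fun ω => Real.log (1 - Real.exp (-lam ω))) q) :
    (∫ ω, Real.log (1 - Real.exp (-lam ω)) ∂q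
      ≥ -(∫ ω, lam ω ∂q)
        + Real.log (Real.exp (Real.exp (∫ ω, Real.log (lam ω) ∂q)) - 1))
    ∧ ∀ c : ℝ, (∀ᵐ ω ∂q, lam ω = c) →
        ∫ ω, Real.log (1 - Real.exp (-lam ω)) ∂q
          = -(∫ ω, lam ω ∂q)
            + Real.log (Real.exp (Real.exp (∫ ω, Real.log (lam ω) ∂q)) - 1) := by
  set g : ℝ → ℝ := fun t => Real.log (Real.exp (Real.exp t) - 1) with hg
  -- pointwise identity a.e.: g (log (lam ω)) = lam ω + log(1 - exp(-lam ω))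
  have hae : ∀ᵐ ω ∂q, g (Real.log (lam ω))
      = lam ω + Real.log (1 - Real.exp (-lam ω)) := by
    filter_upwards [hpos] with ω hω
    have h1 : Real.exp (Real.log (lam ω)) = lam ω := Real.exp_log hω
    simp only [hg, h1]
    rw [aux_log_one_sub_exp_neg (lam ω) hω]
    ring
  have hgi : Integrable (g ∘ fun ω => Real.log (lam ω)) q := by
    apply (hint.add hloglink).congr
    filter_upwards [hae] with ω hω
    exact hω.symm
  have hjensen : g (∫ ω, Real.log (lam ω) ∂q) ≤ ∫ ω, g (Real.log (lam ω)) ∂q :=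
    aux_g_convex.map_integral_le
      (Differentiable.continuous (f := g)
        (fun t => (aux_g_hasDeriv t).differentiableAt)).continuousOn
      isClosed_univ (Filter.Eventually.of_forall fun ω => Set.mem_univ _) hlogint hgi
  have hsplit : ∫ ω, g (Real.log (lam ω)) ∂q
      = (∫ ω, lam ω ∂q) + ∫ ω, Real.log (1 - Real.exp (-lam ω)) ∂q := by
    rw [← integral_add hint hloglink]
    exact integral_congr_ae hae
  constructor
  · have : g (∫ ω, Real.log (lam ω) ∂q)
        ≤ (∫ ω, lam ω ∂q) + ∫ ω, Real.log (1 - Real.exp (-lam ω)) ∂q := by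
      rw [← hsplit]; exact hjensen
    simp only [hg] at this
    linarith
  · intro c hc
    have hcpos : 0 < c := by
      obtain ⟨ω, hω1, hω2⟩ := (hpos.and hc).exists
      rwa [hω2] at hω1
    have h1 : ∫ ω, lam ω ∂q = c := by
      rw [integral_congr_ae hc]; simp
    have h2 : ∫ ω, Real.log (lam ω) ∂q = Real.log c := by
      rw [integral_congr_ae (by filter_upwards [hc] with ω hω; rw [hω] :
        (fun ω => Real.log (lam ω)) =ᵐ[q] fun _ => Real.log c)]
      simp
    have h3 : ∫ ω, Real.log (1 - Real.exp (-lam ω)) ∂q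
        = Real.log (1 - Real.exp (-c)) := by
      rw [integral_congr_ae (by filter_upwards [hc] with ω hω; rw [hω] :
        (fun ω => Real.log (1 - Real.exp (-lam ω))) =ᵐ[q] fun _ => Real.log (1 - Real.exp (-c)))]
      simp
    rw [h1, h2, h3, Real.exp_log hcpos, aux_log_one_sub_exp_neg c hcpos]
end

section
/- Fix S ∈ ℝ. For any probability mass function r on the positive integers {1, 2, 3, …} such that Σ_{x≥1} r(x)·x < ∞, Σ_{x≥1} r(x)·log(x!) < ∞, and the entropy H(r) = −Σ_{x≥1} r(x) log r(x) is finite, one has S · Σ_{x≥1} r(x)·x − Σ_{x≥1} r(x)·log(x!) + H(r) ≤ log( exp(exp(S)) − 1 ). Moreover, equality is attained by the zero-truncated Poisson distribution r*(x) = exp(S·x) / ( x! · (exp(exp(S)) − 1) ) for x ≥ 1. -/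
open Real

/-- The zero-truncated Poisson pmf with log-rate `S`, supported on the positive integers. -/
noncomputable def ztPoisson (S : ℝ) (x : ℕ) : ℝ :=
  if x = 0 then 0
  else Real.exp (S * x) / ((Nat.factorial x : ℝ) * (Real.exp (Real.exp S) - 1))

section Aux

variable (S : ℝ)

private lemma Zpos : 0 < Real.exp (Real.exp S) - 1 := by
  have : (1:ℝ) < Real.exp (Real.exp S) := by
    rw [← Real.exp_zero]
    exact Real.exp_lt_exp.mpr (Real.exp_pos S)
  linarith

private lemma exp_mul_nat (c : ℝ) (x : ℕ) : Real.exp (c * x) = Real.exp c ^ x := by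
  rw [mul_comm, Real.exp_nat_mul]

private lemma zt_nonneg (x : ℕ) : 0 ≤ ztPoisson S x := by
  unfold ztPoisson
  split
  · exact le_refl _
  · exact div_nonneg (Real.exp_pos _).le
      (mul_nonneg (Nat.cast_nonneg _) (Zpos S).le)

private lemma zt_pos {x : ℕ} (hx : x ≠ 0) : 0 < ztPoisson S x := by
  unfold ztPoisson
  rw [if_neg hx]
  exact div_pos (Real.exp_pos _)
    (mul_pos (by exact_mod_cast Nat.factorial_pos x) (Zpos S))

private lemma zt_log {x : ℕ} (hx : x ≠ 0) :
    Real.log (ztPoisson S x) =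
      S * x - Real.log (Nat.factorial x : ℝ) - Real.log (Real.exp (Real.exp S) - 1) := by
  have hf : (0:ℝ) < (Nat.factorial x : ℝ) := by exact_mod_cast Nat.factorial_pos x
  unfold ztPoisson
  rw [if_neg hx, Real.log_div (Real.exp_ne_zero _) (mul_pos hf (Zpos S)).ne',
    Real.log_mul hf.ne' (Zpos S).ne', Real.log_exp]
  ring

private lemma g_summable (c : ℝ) :
    Summable (fun x : ℕ => Real.exp c ^ x / (Nat.factorial x : ℝ)) :=
  Real.summable_pow_div_factorial _

private lemma g_tsum (c : ℝ) :
    ∑' x : ℕ, Real.exp c ^ x / (Nat.factorial x : ℝ) = Real.exp (Real.exp c) := by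
  rw [Real.exp_eq_exp_ℝ, NormedSpace.exp_eq_tsum_div]

private lemma nat_le_exp (x : ℕ) : (x : ℝ) ≤ Real.exp x := by
  have := Real.add_one_le_exp (x : ℝ)
  linarith

private lemma zt_summable : Summable (ztPoisson S) := by
  apply Summable.of_nonneg_of_le (zt_nonneg S)
    (f := fun x => Real.exp S ^ x / (Nat.factorial x : ℝ) / (Real.exp (Real.exp S) - 1))
  · intro x
    unfold ztPoisson
    split
    · exact div_nonneg (by positivity) (Zpos S).le
    · rw [exp_mul_nat, div_div]
  · exact (g_summable S).div_const _

private lemma zt_tsum : ∑' x, ztPoisson S x = 1 := by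
  have hZ := Zpos S
  have hg : Summable (fun x : ℕ =>
      Real.exp S ^ x / (Nat.factorial x : ℝ) / (Real.exp (Real.exp S) - 1)) :=
    (g_summable S).div_const _
  have h2 : ∑' x : ℕ, Real.exp S ^ x / (Nat.factorial x : ℝ) / (Real.exp (Real.exp S) - 1)
      = Real.exp S ^ 0 / (Nat.factorial 0 : ℝ) / (Real.exp (Real.exp S) - 1)
        + ∑' n : ℕ, Real.exp S ^ (n+1) / (Nat.factorial (n+1) : ℝ)
            / (Real.exp (Real.exp S) - 1) :=
    Summable.tsum_eq_zero_add hg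
  have h4 : ∑' x : ℕ, Real.exp S ^ x / (Nat.factorial x : ℝ) / (Real.exp (Real.exp S) - 1)
      = Real.exp (Real.exp S) / (Real.exp (Real.exp S) - 1) := by
    rw [tsum_div_const, g_tsum]
  have h3 : ∀ n : ℕ, ztPoisson S (n + 1)
      = Real.exp S ^ (n+1) / (Nat.factorial (n+1) : ℝ) / (Real.exp (Real.exp S) - 1) := by
    intro n
    unfold ztPoisson
    rw [if_neg (Nat.succ_ne_zero n), exp_mul_nat, div_div]
  have htail : ∑' n : ℕ, Real.exp S ^ (n+1) / (Nat.factorial (n+1) : ℝ)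
      / (Real.exp (Real.exp S) - 1)
      = Real.exp (Real.exp S) / (Real.exp (Real.exp S) - 1)
        - 1 / (Real.exp (Real.exp S) - 1) := by
    rw [h4] at h2
    simp only [pow_zero, Nat.factorial_zero, Nat.cast_one] at h2
    linarith
  rw [Summable.tsum_eq_zero_add (zt_summable S)]
  simp only [h3]
  rw [htail]
  have : ztPoisson S 0 = 0 := by simp [ztPoisson]
  rw [this, div_sub_div_same, div_self hZ.ne']
  ring

private lemma zt_x_summable : Summable (fun x => ztPoisson S x * (x : ℝ)) := by
  apply Summable.of_nonneg_of_le
    (fun x => mul_nonneg (zt_nonneg S x) (Nat.cast_nonneg x))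
    (f := fun x => Real.exp (S+1) ^ x / (Nat.factorial x : ℝ) / (Real.exp (Real.exp S) - 1))
  · intro x
    have hfp : (0:ℝ) < (Nat.factorial x : ℝ) := by exact_mod_cast Nat.factorial_pos x
    unfold ztPoisson
    split
    · rw [zero_mul]
      exact div_nonneg (by positivity) (Zpos S).le
    · rw [← exp_mul_nat, div_div]
      rw [div_mul_eq_mul_div,
        div_le_div_iff₀ (mul_pos hfp (Zpos S)) (mul_pos hfp (Zpos S))]
      have hx : Real.exp (S * x) * (x : ℝ) ≤ Real.exp ((S+1) * x) := by
        calc Real.exp (S * x) * (x : ℝ) ≤ Real.exp (S * x) * Real.exp x :=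
              mul_le_mul_of_nonneg_left (nat_le_exp x) (Real.exp_pos _).le
          _ = Real.exp ((S+1) * x) := by rw [← Real.exp_add]; ring_nf
      exact mul_le_mul_of_nonneg_right hx
        (mul_nonneg (Nat.cast_nonneg _) (Zpos S).le)
  · exact (g_summable (S+1)).div_const _

private lemma log_fact_le (x : ℕ) : Real.log (Nat.factorial x : ℝ) ≤ Real.exp (2 * x) := by
  rcases Nat.eq_zero_or_pos x with h | h
  · subst h
    simpa using (Real.exp_pos (2 * (0:ℕ) : ℝ)).le
  · have h1 : (Nat.factorial x : ℝ) ≤ (x : ℝ) ^ x := by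
      exact_mod_cast Nat.factorial_le_pow x
    have hxpos : (0:ℝ) < (x:ℝ) := by exact_mod_cast h
    calc Real.log (Nat.factorial x : ℝ) ≤ Real.log ((x : ℝ) ^ x) :=
          Real.log_le_log (by exact_mod_cast Nat.factorial_pos x) h1
      _ = (x : ℝ) * Real.log (x : ℝ) := by rw [Real.log_pow]
      _ ≤ (x : ℝ) * (x : ℝ) := by
          apply mul_le_mul_of_nonneg_left _ hxpos.le
          have := Real.log_le_sub_one_of_pos hxpos
          linarith
      _ ≤ Real.exp x * Real.exp x := by
          apply mul_le_mul (nat_le_exp x) (nat_le_exp x) hxpos.le (Real.exp_pos _).le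
      _ = Real.exp (2 * x) := by rw [← Real.exp_add]; ring_nf

private lemma log_fact_nonneg (x : ℕ) : 0 ≤ Real.log (Nat.factorial x : ℝ) :=
  Real.log_nonneg (by exact_mod_cast Nat.one_le_iff_ne_zero.mpr (Nat.factorial_pos x).ne')

private lemma zt_logfact_summable :
    Summable (fun x => ztPoisson S x * Real.log (Nat.factorial x : ℝ)) := by
  apply Summable.of_nonneg_of_le
    (fun x => mul_nonneg (zt_nonneg S x) (log_fact_nonneg x))
    (f := fun x => Real.exp (S+2) ^ x / (Nat.factorial x : ℝ) / (Real.exp (Real.exp S) - 1))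
  · intro x
    have hfp : (0:ℝ) < (Nat.factorial x : ℝ) := by exact_mod_cast Nat.factorial_pos x
    unfold ztPoisson
    split
    · rw [zero_mul]
      exact div_nonneg (by positivity) (Zpos S).le
    · rw [← exp_mul_nat, div_div]
      rw [div_mul_eq_mul_div,
        div_le_div_iff₀ (mul_pos hfp (Zpos S)) (mul_pos hfp (Zpos S))]
      have hx : Real.exp (S * x) * Real.log (Nat.factorial x : ℝ) ≤ Real.exp ((S+2) * x) := by
        calc Real.exp (S * x) * Real.log (Nat.factorial x : ℝ)
            ≤ Real.exp (S * x) * Real.exp (2 * x) :=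
              mul_le_mul_of_nonneg_left (log_fact_le x) (Real.exp_pos _).le
          _ = Real.exp ((S+2) * x) := by rw [← Real.exp_add]; ring_nf
      apply mul_le_mul_of_nonneg_right hx
      exact mul_nonneg (Nat.cast_nonneg _) (Zpos S).le
  · exact (g_summable (S+2)).div_const _

private lemma zt_mul_log (x : ℕ) :
    ztPoisson S x * Real.log (ztPoisson S x)
      = S * (ztPoisson S x * x) - ztPoisson S x * Real.log (Nat.factorial x : ℝ)
        - Real.log (Real.exp (Real.exp S) - 1) * ztPoisson S x := by
  rcases Nat.eq_zero_or_pos x with h | h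
  · subst h; simp [ztPoisson]
  · rw [zt_log S (Nat.pos_iff_ne_zero.mp h)]
    ring

end Aux

/-- Gibbs variational bound for the zero-truncated Poisson family. -/
theorem gibbs_bound_truncated_poisson (S : ℝ) :
    (∀ r : ℕ → ℝ, r 0 = 0 → (∀ x, 0 ≤ r x) → Summable r → (∑' x, r x) = 1 →
      Summable (fun x => r x * (x : ℝ)) →
      Summable (fun x => r x * Real.log (Nat.factorial x : ℝ)) →
      Summable (fun x => r x * Real.log (r x)) →
      S * (∑' x, r x * (x : ℝ)) - (∑' x, r x * Real.log (Nat.factorial x : ℝ))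
          + (-∑' x, r x * Real.log (r x))
        ≤ Real.log (Real.exp (Real.exp S) - 1))
    ∧ S * (∑' x, ztPoisson S x * (x : ℝ))
        - (∑' x, ztPoisson S x * Real.log (Nat.factorial x : ℝ))
        + (-∑' x, ztPoisson S x * Real.log (ztPoisson S x))
      = Real.log (Real.exp (Real.exp S) - 1) := by
  have hZ := Zpos S
  set L := Real.log (Real.exp (Real.exp S) - 1) with hL
  constructor
  · intro r hr0 hrnn hrs hr1 h5 h6 h7
    set a : ℕ → ℝ := fun x =>
      S * (r x * x) - r x * Real.log (Nat.factorial x : ℝ) - r x * Real.log (r x)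
        - L * r x with ha_def
    have ha : Summable a :=
      (((h5.mul_left S).sub h6).sub h7).sub (hrs.mul_left L)
    have hb : Summable (fun x => ztPoisson S x - r x) := (zt_summable S).sub hrs
    have hle : ∀ x, a x ≤ ztPoisson S x - r x := by
      intro x
      rcases Nat.eq_zero_or_pos x with h | h
      · subst h
        simp [ha_def, hr0, ztPoisson]
      · have hx0 : x ≠ 0 := Nat.pos_iff_ne_zero.mp h
        rcases eq_or_lt_of_le (hrnn x) with hr | hr
        · simp [ha_def, ← hr]
          exact zt_nonneg S x
        · have hztp := zt_pos S hx0
          have key : a x = r x * Real.log (ztPoisson S x / r x) := by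
            rw [Real.log_div hztp.ne' hr.ne', zt_log S hx0, ha_def]
            ring
          rw [key]
          have hlog : Real.log (ztPoisson S x / r x) ≤ ztPoisson S x / r x - 1 :=
            Real.log_le_sub_one_of_pos (div_pos hztp hr)
          calc r x * Real.log (ztPoisson S x / r x)
              ≤ r x * (ztPoisson S x / r x - 1) :=
                mul_le_mul_of_nonneg_left hlog hr.le
            _ = ztPoisson S x - r x := by field_simp
    have hsum_le : ∑' x, a x ≤ ∑' x, (ztPoisson S x - r x) := Summable.tsum_le_tsum hle ha hb
    have hrhs : ∑' x, (ztPoisson S x - r x) = 0 := by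
      rw [Summable.tsum_sub (zt_summable S) hrs, zt_tsum S, hr1]
      ring
    have hlhs : ∑' x, a x
        = S * (∑' x, r x * (x : ℝ)) - (∑' x, r x * Real.log (Nat.factorial x : ℝ))
          - (∑' x, r x * Real.log (r x)) - L := by
      rw [ha_def]
      rw [Summable.tsum_sub (((h5.mul_left S).sub h6).sub h7) (hrs.mul_left L),
        Summable.tsum_sub ((h5.mul_left S).sub h6) h7,
        Summable.tsum_sub (h5.mul_left S) h6, tsum_mul_left, tsum_mul_left, hr1]
      ring
    rw [hlhs, hrhs] at hsum_le
    linarith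
  · have hs3 : Summable (fun x => ztPoisson S x * Real.log (ztPoisson S x)) := by
      have : (fun x => ztPoisson S x * Real.log (ztPoisson S x))
          = fun x => S * (ztPoisson S x * x) - ztPoisson S x * Real.log (Nat.factorial x : ℝ)
            - L * ztPoisson S x := by
        funext x; exact zt_mul_log S x
      rw [this]
      exact (((zt_x_summable S).mul_left S).sub (zt_logfact_summable S)).sub
        ((zt_summable S).mul_left L)
    have hval : ∑' x, ztPoisson S x * Real.log (ztPoisson S x)
        = S * (∑' x, ztPoisson S x * (x : ℝ))
          - (∑' x, ztPoisson S x * Real.log (Nat.factorial x : ℝ)) - L := by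
      calc ∑' x, ztPoisson S x * Real.log (ztPoisson S x)
          = ∑' x, (S * (ztPoisson S x * x) - ztPoisson S x * Real.log (Nat.factorial x : ℝ)
              - L * ztPoisson S x) := by
            apply tsum_congr; intro x; exact zt_mul_log S x
        _ = S * (∑' x, ztPoisson S x * (x : ℝ))
            - (∑' x, ztPoisson S x * Real.log (Nat.factorial x : ℝ))
            - L * (∑' x, ztPoisson S x) := by
            rw [Summable.tsum_sub (((zt_x_summable S).mul_left S).sub (zt_logfact_summable S))
              ((zt_summable S).mul_left L),
              Summable.tsum_sub ((zt_x_summable S).mul_left S) (zt_logfact_summable S),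
              tsum_mul_left, tsum_mul_left]
        _ = _ := by rw [zt_tsum S]; ring
    rw [hval]
    ring
end

section
/- Let (R, 𝓡) and (E, 𝓔) be measurable spaces, let κ be a Markov kernel from R to E, and let μ and ν be probability measures on R. Then the Kullback–Leibler divergence satisfies KL( μ ⊗ κ ‖ ν ⊗ κ ) = KL( μ ‖ ν ), where μ ⊗ κ denotes the measure on R × E given by (μ ⊗ κ)(A × B) = ∫_A κ(r)(B) dμ(r). -/
open MeasureTheory ProbabilityTheory
open scoped ENNReal Classical

/-- Kullback–Leibler divergence: `∫ log(dP/dQ) dP` when `P ≪ Q` and the log-likelihood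
ratio is integrable, `∞` otherwise. -/
noncomputable def klDiv {α : Type*} [MeasurableSpace α] (P Q : Measure α) : ℝ≥0∞ :=
  if P ≪ Q ∧ Integrable (llr P Q) P then ENNReal.ofReal (∫ x, llr P Q x ∂P) else ⊤

lemma aux_compProd_withDensity_fst
    {R E : Type*} [MeasurableSpace R] [MeasurableSpace E]
    (κ : Kernel R E) [IsMarkovKernel κ] (ν : Measure R) [IsProbabilityMeasure ν]
    {f : R → ℝ≥0∞} (hf : Measurable f) :
    (ν.compProd κ).withDensity (fun p => f p.1) = (ν.withDensity f).compProd κ := by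
  ext s hs
  rw [withDensity_apply _ hs, Measure.compProd_apply hs,
    lintegral_withDensity_eq_lintegral_mul _ hf (Kernel.measurable_kernel_prodMk_left hs),
    ← lintegral_indicator hs _,
    Measure.lintegral_compProd (f := s.indicator fun p : R × E => f p.1)
      (Measurable.indicator (hf.comp measurable_fst) hs)]
  congr 1
  ext a
  have : ∀ b, s.indicator (fun p : R × E => f p.1) (a, b)
      = (Prod.mk a ⁻¹' s).indicator (fun _ => f a) b := by
    intro b
    by_cases hb : (a, b) ∈ s <;> simp [Set.indicator, hb, Set.mem_preimage]
  simp_rw [this]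
  rw [lintegral_indicator (measurable_prodMk_left hs), setLIntegral_const]
  rfl

lemma aux_rnDeriv_compProd
    {R E : Type*} [MeasurableSpace R] [MeasurableSpace E]
    (κ : Kernel R E) [IsMarkovKernel κ]
    (μ ν : Measure R) [IsProbabilityMeasure μ] [IsProbabilityMeasure ν]
    (hμν : μ ≪ ν) :
    (μ.compProd κ).rnDeriv (ν.compProd κ) =ᵐ[ν.compProd κ] fun p => μ.rnDeriv ν p.1 := by
  have h1 : (ν.compProd κ).withDensity ((μ.rnDeriv ν) ∘ Prod.fst) = μ.compProd κ := by
    rw [show (μ.rnDeriv ν) ∘ Prod.fst = fun p : R × E => μ.rnDeriv ν p.1 from rfl,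
      aux_compProd_withDensity_fst κ ν (Measure.measurable_rnDeriv μ ν),
      Measure.withDensity_rnDeriv_eq _ _ hμν]
  have h2 := Measure.rnDeriv_withDensity (ν.compProd κ)
    ((Measure.measurable_rnDeriv μ ν).comp measurable_fst)
  rw [h1] at h2
  filter_upwards [h2] with p hp using hp

lemma aux_llr_compProd
    {R E : Type*} [MeasurableSpace R] [MeasurableSpace E]
    (κ : Kernel R E) [IsMarkovKernel κ]
    (μ ν : Measure R) [IsProbabilityMeasure μ] [IsProbabilityMeasure ν]
    (hμν : μ ≪ ν) :
    llr (μ.compProd κ) (ν.compProd κ) =ᵐ[μ.compProd κ] fun p => llr μ ν p.1 := by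
  have hac : μ.compProd κ ≪ ν.compProd κ :=
    Measure.AbsolutelyContinuous.compProd_left hμν κ
  filter_upwards [hac.ae_le (aux_rnDeriv_compProd κ μ ν hμν)] with p hp
  simp only [llr, hp]

lemma aux_integrable_fst_iff
    {R E : Type*} [MeasurableSpace R] [MeasurableSpace E]
    (κ : Kernel R E) [IsMarkovKernel κ]
    (μ : Measure R) [IsProbabilityMeasure μ] {f : R → ℝ} (hf : Measurable f) :
    Integrable (fun p : R × E => f p.1) (μ.compProd κ) ↔ Integrable f μ := by
  have hfst : (μ.compProd κ).map Prod.fst = μ := Measure.fst_compProd μ κ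
  have h2 := integrable_map_measure (μ := μ.compProd κ) (f := Prod.fst) (g := f)
    hf.aestronglyMeasurable measurable_fst.aemeasurable
  rw [hfst] at h2
  exact h2.symm

/-- Pushing both measures through the same Markov kernel leaves the KL
divergence unchanged. -/
theorem klDiv_compProd_same_kernel
    {R E : Type*} [MeasurableSpace R] [MeasurableSpace E]
    (κ : Kernel R E) [IsMarkovKernel κ]
    (μ ν : Measure R) [IsProbabilityMeasure μ] [IsProbabilityMeasure ν] :
    klDiv (μ.compProd κ) (ν.compProd κ) = klDiv μ ν := by
  unfold klDiv
  by_cases h : μ ≪ ν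
  · have hllr := aux_llr_compProd κ μ ν h
    have hint : Integrable (llr (μ.compProd κ) (ν.compProd κ)) (μ.compProd κ)
        ↔ Integrable (llr μ ν) μ := by
      rw [integrable_congr hllr, aux_integrable_fst_iff κ μ (measurable_llr μ ν)]
    by_cases hi : Integrable (llr μ ν) μ
    · rw [if_pos ⟨Measure.AbsolutelyContinuous.compProd_left h κ, hint.mpr hi⟩, if_pos ⟨h, hi⟩]
      congr 1
      rw [integral_congr_ae hllr]
      have hfst : (μ.compProd κ).map Prod.fst = μ := Measure.fst_compProd μ κ
      have h2 := integral_map (μ := μ.compProd κ) (φ := Prod.fst) (f := llr μ ν)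
        measurable_fst.aemeasurable (stronglyMeasurable_llr μ ν).aestronglyMeasurable
      rw [hfst] at h2
      exact h2.symm
    · rw [if_neg (fun hc => hi (hint.mp hc.2)), if_neg (fun hc => hi hc.2)]
  · have h' : ¬ μ.compProd κ ≪ ν.compProd κ := fun hc =>
      h (Measure.absolutelyContinuous_of_compProd hc)
    rw [if_neg (fun hc => h' hc.1), if_neg (fun hc => h hc.1)]
end

section
/- Let n, m ∈ ℕ, λ̄ > 0, and 0 < c₀ ≤ C₀ with C₀·λ̄ ≤ 1/2. Let Λ = (λ_{ij}) and Λ' = (λ'_{ij}) be matrices in ℝ^{n×m} all of whose entries lie in the interval [c₀λ̄, C₀λ̄]. Let P_Λ = ⊗_{i,j} Bern(1 − exp(−λ_{ij})) and P_{Λ'} = ⊗_{i,j} Bern(1 − exp(−λ'_{ij})) be the corresponding product Bernoulli measures on {0,1}^{n×m}. Then (e^{−1} / (2·C₀·λ̄)) · Σ_{i,j} (λ_{ij} − λ'_{ij})² ≤ KL( P_Λ ‖ P_{Λ'} ) ≤ (4 / (c₀·λ̄)) · Σ_{i,j} (λ_{ij} − λ'_{ij})². -/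
open MeasureTheory ProbabilityTheory Real
open scoped ENNReal Classical

/-- The Bernoulli measure on `Bool` with success probability `p`. -/
noncomputable def bern (p : ℝ) : Measure Bool :=
  ENNReal.ofReal p • Measure.dirac true + ENNReal.ofReal (1 - p) • Measure.dirac false

/-! ### Auxiliary calculus lemmas -/

/-- generic quadratic lower bound via derivative comparison -/
lemma quad_le (F f : ℝ → ℝ) (u v K : ℝ) (huv : u ≤ v)
    (hF : ∀ s ∈ Set.Icc u v, HasDerivAt F (f s) s)
    (hu : F u = 0)
    (hK : ∀ s ∈ Set.Icc u v, K * (s - u) ≤ f s) :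
    K / 2 * (v - u) ^ 2 ≤ F v := by
  set Φ : ℝ → ℝ := fun s => F s - K / 2 * (s - u) ^ 2 with hΦdef
  have hΦ : ∀ s ∈ Set.Icc u v, HasDerivAt Φ (f s - K * (s - u)) s := by
    intro s hs
    have h1 : HasDerivAt (fun s : ℝ => K / 2 * (s - u) ^ 2)
        (K / 2 * (2 * (s - u) ^ 1 * 1)) s :=
      (((hasDerivAt_id s).sub_const u).pow 2).const_mul (K / 2)
    have h2 := (hF s hs).sub h1
    refine h2.congr_deriv ?_; ring
  have hmono : MonotoneOn Φ (Set.Icc u v) := by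
    apply monotoneOn_of_deriv_nonneg (convex_Icc u v)
    · intro s hs; exact ((hΦ s hs).continuousAt).continuousWithinAt
    · intro s hs
      rw [interior_Icc] at hs
      exact ((hΦ s (Set.mem_Icc_of_Ioo hs)).differentiableAt).differentiableWithinAt
    · intro s hs
      rw [interior_Icc] at hs
      rw [(hΦ s (Set.mem_Icc_of_Ioo hs)).deriv]
      have := hK s (Set.mem_Icc_of_Ioo hs)
      linarith
  have := hmono (Set.left_mem_Icc.2 huv) (Set.right_mem_Icc.2 huv) huv
  simp only [hΦdef, hu] at this
  linarith

lemma quad_ge (F f : ℝ → ℝ) (u v K : ℝ) (huv : u ≤ v)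
    (hF : ∀ s ∈ Set.Icc u v, HasDerivAt F (f s) s)
    (hu : F u = 0)
    (hK : ∀ s ∈ Set.Icc u v, f s ≤ K * (s - u)) :
    F v ≤ K / 2 * (v - u) ^ 2 := by
  have := quad_le (fun s => -F s) (fun s => -f s) u v (-K) huv
    (fun s hs => (hF s hs).neg) (by simp [hu])
    (fun s hs => by have := hK s hs; linarith)
  simp only [neg_div, neg_mul] at this
  linarith

lemma exp_neg_one_gt : (1:ℝ)/8 < exp (-1) := by
  have h := Real.exp_one_lt_d9
  rw [Real.exp_neg, one_div, inv_lt_inv₀ (by norm_num) (Real.exp_pos 1)]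
  nlinarith

lemma deriv_bounds (a A l s : ℝ) (ha : 0 < a) (hA : A ≤ 1/2)
    (hl : l ∈ Set.Icc a A) (hs : s ∈ Set.Icc a A) (hls : l ≤ s) :
    exp (-1)/A * (s - l) ≤ (exp (-l) - exp (-s)) / (1 - exp (-s)) ∧
    (exp (-l) - exp (-s)) / (1 - exp (-s)) ≤ 8 / a * (s - l) := by
  obtain ⟨hal, hlA⟩ := hl
  obtain ⟨has, hsA⟩ := hs
  have hA0 : 0 < A := lt_of_lt_of_le ha (hal.trans hlA)
  have hs0 : 0 < s := lt_of_lt_of_le ha has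
  have hl0 : 0 < l := lt_of_lt_of_le ha hal
  have hD : 0 < 1 - exp (-s) := by
    have : exp (-s) < exp 0 := Real.exp_lt_exp.2 (by linarith)
    simpa using this
  have hDA : 1 - exp (-s) ≤ A := by
    have := Real.add_one_le_exp (-s); linarith
  have hDa : a * exp (-1) ≤ 1 - exp (-s) := by
    have h1 : s + 1 ≤ exp s := Real.add_one_le_exp s
    have h2 : exp (-1) ≤ exp (-s) := Real.exp_le_exp.2 (by linarith)
    have h3 : exp s * exp (-s) = 1 := by rw [← Real.exp_add]; simp
    nlinarith [Real.exp_pos (-s), Real.exp_pos s]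
  have hes : exp (-1) ≤ exp (-s) := Real.exp_le_exp.2 (by linarith)
  have hel : exp (-1) ≤ exp (-l) := Real.exp_le_exp.2 (by linarith)
  have hel1 : exp (-l) ≤ 1 := by
    have : exp (-l) ≤ exp 0 := Real.exp_le_exp.2 (by linarith)
    simpa using this
  have hexp1 : exp (-l) = exp (-s) * exp (s - l) := by rw [← Real.exp_add]; ring_nf
  have hexp2 : exp (-s) = exp (-l) * exp (l - s) := by rw [← Real.exp_add]; ring_nf
  have hN1 : exp (-s) * (s - l) ≤ exp (-l) - exp (-s) := by
    have h2 : s - l + 1 ≤ exp (s - l) := Real.add_one_le_exp _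
    nlinarith [Real.exp_pos (-s)]
  have hN2 : exp (-l) - exp (-s) ≤ (s - l) * exp (-l) := by
    have h2 : l - s + 1 ≤ exp (l - s) := Real.add_one_le_exp _
    nlinarith [Real.exp_pos (-l)]
  constructor
  · rw [le_div_iff₀ hD, div_mul_eq_mul_div, div_mul_eq_mul_div, div_le_iff₀ hA0]
    nlinarith [mul_le_mul_of_nonneg_right hes (sub_nonneg.2 hls),
      mul_le_mul_of_nonneg_left hDA (mul_nonneg (Real.exp_pos (-1)).le (sub_nonneg.2 hls)),
      mul_le_mul_of_nonneg_right hN1 hA0.le]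
  · rw [div_le_iff₀ hD]
    have h8 : a / 8 ≤ 1 - exp (-s) := by nlinarith [exp_neg_one_gt]
    have : (8:ℝ) / a * (s - l) * (a / 8) ≤ 8 / a * (s - l) * (1 - exp (-s)) := by
      exact mul_le_mul_of_nonneg_left h8 (mul_nonneg (by positivity) (sub_nonneg.2 hls))
    have heq : (8:ℝ) / a * (s - l) * (a / 8) = s - l := by field_simp
    nlinarith

lemma deriv_bounds' (a A l s : ℝ) (ha : 0 < a) (hA : A ≤ 1/2)
    (hl : l ∈ Set.Icc a A) (hs : s ∈ Set.Icc a A) (hsl : s ≤ l) :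
    exp (-1)/A * (l - s) ≤ (exp (-s) - exp (-l)) / (1 - exp (-s)) ∧
    (exp (-s) - exp (-l)) / (1 - exp (-s)) ≤ 8 / a * (l - s) := by
  obtain ⟨hal, hlA⟩ := hl
  obtain ⟨has, hsA⟩ := hs
  have hA0 : 0 < A := lt_of_lt_of_le ha (hal.trans hlA)
  have hs0 : 0 < s := lt_of_lt_of_le ha has
  have hl0 : 0 < l := lt_of_lt_of_le ha hal
  have hD : 0 < 1 - exp (-s) := by
    have : exp (-s) < exp 0 := Real.exp_lt_exp.2 (by linarith)
    simpa using this
  have hDA : 1 - exp (-s) ≤ A := by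
    have := Real.add_one_le_exp (-s); linarith
  have hDs : s * exp (-s) ≤ 1 - exp (-s) := by
    have h1 : s + 1 ≤ exp s := Real.add_one_le_exp s
    have h3 : exp s * exp (-s) = 1 := by rw [← Real.exp_add]; simp
    nlinarith [Real.exp_pos (-s)]
  have hel : exp (-1) ≤ exp (-l) := Real.exp_le_exp.2 (by linarith)
  have hexp1 : exp (-s) = exp (-l) * exp (l - s) := by rw [← Real.exp_add]; ring_nf
  have hN1 : exp (-l) * (l - s) ≤ exp (-s) - exp (-l) := by
    have h2 : l - s + 1 ≤ exp (l - s) := Real.add_one_le_exp _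
    nlinarith [Real.exp_pos (-l)]
  have hN2 : exp (-s) - exp (-l) ≤ (l - s) * exp (-s) := by
    have h2 : s - l + 1 ≤ exp (s - l) := Real.add_one_le_exp _
    have hexp2 : exp (-l) = exp (-s) * exp (s - l) := by rw [← Real.exp_add]; ring_nf
    nlinarith [Real.exp_pos (-s)]
  constructor
  · rw [le_div_iff₀ hD, div_mul_eq_mul_div, div_mul_eq_mul_div, div_le_iff₀ hA0]
    nlinarith [mul_le_mul_of_nonneg_right hel (sub_nonneg.2 hsl),
      mul_le_mul_of_nonneg_left hDA (mul_nonneg (Real.exp_pos (-1)).le (sub_nonneg.2 hsl)),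
      mul_le_mul_of_nonneg_right hN1 hA0.le]
  · rw [div_le_iff₀ hD]
    have h8 : 8 / a * (l - s) * (s * exp (-s)) ≤ 8 / a * (l - s) * (1 - exp (-s)) := by
      exact mul_le_mul_of_nonneg_left hDs (mul_nonneg (by positivity) (sub_nonneg.2 hsl))
    have heq : (8:ℝ) / a * (l - s) * (s * exp (-s)) = 8 * (s/a) * ((l - s) * exp (-s)) := by
      field_simp
    have hsa : 1 ≤ s / a := (one_le_div ha).2 has
    nlinarith [mul_nonneg (sub_nonneg.2 hsl) (Real.exp_pos (-s)).le]

lemma hasDerivAt_klF (l s : ℝ) (hs : 0 < s) :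
    HasDerivAt (fun t => (1 - exp (-l)) * (log (1 - exp (-l)) - log (1 - exp (-t)))
        + exp (-l) * (t - l))
      ((exp (-l) - exp (-s)) / (1 - exp (-s))) s := by
  have hD : 0 < 1 - exp (-s) := by
    have : exp (-s) < exp 0 := Real.exp_lt_exp.2 (by linarith)
    simpa using this
  have h1 : HasDerivAt (fun t : ℝ => exp (-t)) (exp (-s) * (-1)) s :=
    (hasDerivAt_neg s).exp
  have h2 : HasDerivAt (fun t : ℝ => 1 - exp (-t)) (-(exp (-s) * (-1))) s := h1.const_sub 1
  have h3 : HasDerivAt (fun t : ℝ => log (1 - exp (-t)))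
      (-(exp (-s) * (-1)) / (1 - exp (-s))) s := h2.log (ne_of_gt hD)
  have h4 := ((h3.const_sub (log (1 - exp (-l)))).const_mul (1 - exp (-l))).add
    (((hasDerivAt_id s).sub_const l).const_mul (exp (-l)))
  refine h4.congr_deriv ?_
  field_simp
  ring

lemma scalar_kl_bounds (a A l l' : ℝ) (ha : 0 < a) (hA : A ≤ 1/2)
    (hl : l ∈ Set.Icc a A) (hl' : l' ∈ Set.Icc a A) :
    exp (-1) / (2 * A) * (l - l') ^ 2 ≤
      (1 - exp (-l)) * log ((1 - exp (-l)) / (1 - exp (-l')))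
        + exp (-l) * log (exp (-l) / exp (-l'))
    ∧ (1 - exp (-l)) * log ((1 - exp (-l)) / (1 - exp (-l')))
        + exp (-l) * log (exp (-l) / exp (-l'))
      ≤ 4 / a * (l - l') ^ 2 := by
  have hA0 : 0 < A := lt_of_lt_of_le ha (hl.1.trans hl.2)
  have hl0 : 0 < l := lt_of_lt_of_le ha hl.1
  have hl'0 : 0 < l' := lt_of_lt_of_le ha hl'.1
  have hDl : 0 < 1 - exp (-l) := by
    have : exp (-l) < exp 0 := Real.exp_lt_exp.2 (by linarith)
    simpa using this
  have hDl' : 0 < 1 - exp (-l') := by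
    have : exp (-l') < exp 0 := Real.exp_lt_exp.2 (by linarith)
    simpa using this
  set F : ℝ → ℝ := fun t => (1 - exp (-l)) * (log (1 - exp (-l)) - log (1 - exp (-t)))
      + exp (-l) * (t - l) with hFdef
  have hFval : (1 - exp (-l)) * log ((1 - exp (-l)) / (1 - exp (-l')))
      + exp (-l) * log (exp (-l) / exp (-l')) = F l' := by
    rw [log_div (ne_of_gt hDl) (ne_of_gt hDl'), log_div (Real.exp_ne_zero _) (Real.exp_ne_zero _),
      Real.log_exp, Real.log_exp, hFdef]
    ring
  have hFl : F l = 0 := by simp [hFdef]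
  rw [hFval]
  rcases le_total l l' with hll' | hll'
  · have hmem : ∀ s ∈ Set.Icc l l', s ∈ Set.Icc a A :=
      fun s hs => ⟨hl.1.trans hs.1, hs.2.trans hl'.2⟩
    have hder : ∀ s ∈ Set.Icc l l',
        HasDerivAt F ((exp (-l) - exp (-s)) / (1 - exp (-s))) s :=
      fun s hs => hasDerivAt_klF l s (lt_of_lt_of_le hl0 hs.1)
    constructor
    · have := quad_le F (fun s => (exp (-l) - exp (-s)) / (1 - exp (-s))) l l'
        (exp (-1)/A) hll' hder hFl
        (fun s hs => (deriv_bounds a A l s ha hA hl (hmem s hs) hs.1).1)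
      have heq : exp (-1)/A/2 * (l' - l)^2 = exp (-1)/(2*A) * (l - l')^2 := by ring
      linarith
    · have := quad_ge F (fun s => (exp (-l) - exp (-s)) / (1 - exp (-s))) l l'
        (8/a) hll' hder hFl
        (fun s hs => (deriv_bounds a A l s ha hA hl (hmem s hs) hs.1).2)
      have heq : (8:ℝ)/a/2 * (l' - l)^2 = 4/a * (l - l')^2 := by ring
      linarith
  · set G : ℝ → ℝ := fun s => F (l + l' - s) with hGdef
    have hmem : ∀ s ∈ Set.Icc l' l, s ∈ Set.Icc a A :=
      fun s hs => ⟨hl'.1.trans hs.1, hs.2.trans hl.2⟩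
    have hmem' : ∀ s ∈ Set.Icc l' l, l + l' - s ∈ Set.Icc l' l := by
      intro s hs; exact ⟨by linarith [hs.2], by linarith [hs.1]⟩
    have hder : ∀ s ∈ Set.Icc l' l,
        HasDerivAt G ((exp (-(l + l' - s)) - exp (-l)) / (1 - exp (-(l + l' - s)))) s := by
      intro s hs
      have ht0 : 0 < l + l' - s := lt_of_lt_of_le hl'0 (hmem' s hs).1
      have h1 : HasDerivAt (fun s : ℝ => l + l' - s) (0 - 1) s :=
        (hasDerivAt_const s (l + l')).sub (hasDerivAt_id s)
      have h2 := (hasDerivAt_klF l (l + l' - s) ht0).comp s h1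
      refine h2.congr_deriv ?_
      field_simp
      ring
    have hGl' : G l' = 0 := by simp [hGdef, hFl]
    have hGl : G l = F l' := by simp [hGdef]
    rw [← hGl]
    constructor
    · refine le_trans ?_ (quad_le G _ l' l (exp (-1)/A) hll' hder hGl'
        (fun s hs => ?_))
      · have heq : exp (-1)/A/2 * (l - l')^2 = exp (-1)/(2*A) * (l - l')^2 := by ring
        linarith
      · have h := (deriv_bounds' a A l (l + l' - s) ha hA hl
          (hmem _ (hmem' s hs)) (by linarith [hs.1])).1
        have : l - (l + l' - s) = s - l' := by ring
        rw [this] at h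
        exact h
    · refine le_trans (quad_ge G _ l' l (8/a) hll' hder hGl'
        (fun s hs => ?_)) ?_
      · have h := (deriv_bounds' a A l (l + l' - s) ha hA hl
          (hmem _ (hmem' s hs)) (by linarith [hs.1])).2
        have : l - (l + l' - s) = s - l' := by ring
        rw [this] at h
        exact h
      · have heq : (8:ℝ)/a/2 * (l - l')^2 = 4/a * (l - l')^2 := by ring
        linarith

/-! ### Measure-theoretic lemmas -/

lemma bern_apply (p : ℝ) (b : Bool) :
    bern p {b} = ENNReal.ofReal (cond b p (1 - p)) := by
  cases b <;> simp [bern, Measure.dirac_apply]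

lemma isProbabilityMeasure_bern {p : ℝ} (h0 : 0 ≤ p) (h1 : p ≤ 1) :
    IsProbabilityMeasure (bern p) := by
  constructor
  have : (Set.univ : Set Bool) = {true} ∪ {false} := by
    ext b; cases b <;> simp
  rw [this]
  rw [measure_union (by simp) (measurableSet_singleton _)]
  rw [bern_apply, bern_apply]
  simp only [Bool.cond_true, Bool.cond_false]
  rw [← ENNReal.ofReal_add h0 (by linarith)]
  norm_num

lemma pi_bern_singleton {ι : Type*} [Fintype ι] (p : ι → ℝ)
    (h0 : ∀ i, 0 ≤ p i) (h1 : ∀ i, p i ≤ 1) (x : ι → Bool) :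
    Measure.pi (fun i => bern (p i)) {x}
      = ENNReal.ofReal (∏ i, cond (x i) (p i) (1 - p i)) := by
  haveI : ∀ i, SigmaFinite (bern (p i)) := fun i => by
    have := isProbabilityMeasure_bern (h0 i) (h1 i); infer_instance
  rw [← Set.univ_pi_singleton x, Measure.pi_pi]
  simp_rw [bern_apply]
  rw [ENNReal.ofReal_prod_of_nonneg]
  intro i _
  cases x i
  · simp; linarith [h1 i]
  · simpa using h0 i

lemma tensor_sum {ι : Type*} [Fintype ι] (w w' : ι → Bool → ℝ)
    (hw : ∀ i b, 0 < w i b) (hw' : ∀ i b, 0 < w' i b)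
    (hsum : ∀ i, w i true + w i false = 1) :
    ∑ x : ι → Bool, (∏ i, w i (x i)) * log ((∏ i, w i (x i)) / (∏ i, w' i (x i)))
      = ∑ i, (w i true * log (w i true / w' i true)
          + w i false * log (w i false / w' i false)) := by
  classical
  have hlog : ∀ x : ι → Bool, log ((∏ i, w i (x i)) / (∏ i, w' i (x i)))
      = ∑ i, log (w i (x i) / w' i (x i)) := by
    intro x
    rw [← Finset.prod_div_distrib, Real.log_prod]
    intro i _
    exact ne_of_gt (div_pos (hw i _) (hw' i _))
  simp_rw [hlog, Finset.mul_sum]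
  rw [Finset.sum_comm]
  refine Finset.sum_congr rfl fun i _ => ?_
  have key : ∀ x : ι → Bool, (∏ j, w j (x j)) * log (w i (x i) / w' i (x i))
      = ∏ j, (w j (x j) * (if j = i then log (w j (x j) / w' j (x j)) else 1)) := by
    intro x
    rw [Finset.prod_mul_distrib, Finset.prod_ite_eq' Finset.univ i
      (fun j => log (w j (x j) / w' j (x j)))]
    simp
  simp_rw [key]
  rw [show (∑ x : ι → Bool, ∏ j, w j (x j) * if j = i then log (w j (x j) / w' j (x j)) else 1)
      = ∏ j, ∑ b : Bool, (w j b * if j = i then log (w j b / w' j b) else 1) from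
    (Fintype.prod_sum (fun j b => w j b * if j = i then log (w j b / w' j b) else 1)).symm]
  rw [Finset.prod_eq_single i (fun j _ hji => by
      simp only [if_neg hji, mul_one, Fintype.sum_bool]
      exact hsum j)
    (fun h => absurd (Finset.mem_univ i) h)]
  simp [Fintype.sum_bool]

lemma klDiv_pi_bern {ι : Type*} [Fintype ι] (p q : ι → ℝ)
    (hp0 : ∀ i, 0 < p i) (hp1 : ∀ i, p i < 1) (hq0 : ∀ i, 0 < q i) (hq1 : ∀ i, q i < 1) :
    klDiv (Measure.pi fun i => bern (p i)) (Measure.pi fun i => bern (q i))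
      = ENNReal.ofReal (∑ i, (p i * log (p i / q i)
          + (1 - p i) * log ((1 - p i) / (1 - q i)))) := by
  classical
  haveI hPp : ∀ i, IsProbabilityMeasure (bern (p i)) :=
    fun i => isProbabilityMeasure_bern (hp0 i).le (hp1 i).le
  haveI hPq : ∀ i, IsProbabilityMeasure (bern (q i)) :=
    fun i => isProbabilityMeasure_bern (hq0 i).le (hq1 i).le
  set P := Measure.pi fun i => bern (p i) with hPdef
  set Q := Measure.pi fun i => bern (q i) with hQdef
  haveI : IsProbabilityMeasure P := by rw [hPdef]; infer_instance
  haveI : IsProbabilityMeasure Q := by rw [hQdef]; infer_instance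
  set W : (ι → Bool) → ℝ := fun x => ∏ i, cond (x i) (p i) (1 - p i) with hWdef
  set W' : (ι → Bool) → ℝ := fun x => ∏ i, cond (x i) (q i) (1 - q i) with hW'def
  have hW_pos : ∀ x, 0 < W x := fun x => Finset.prod_pos fun i _ => by
    cases x i
    · simpa using by linarith [hp1 i]
    · simpa using hp0 i
  have hW'_pos : ∀ x, 0 < W' x := fun x => Finset.prod_pos fun i _ => by
    cases x i
    · simpa using by linarith [hq1 i]
    · simpa using hq0 i
  have hP : ∀ x, P {x} = ENNReal.ofReal (W x) :=
    pi_bern_singleton p (fun i => (hp0 i).le) (fun i => (hp1 i).le)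
  have hQ : ∀ x, Q {x} = ENNReal.ofReal (W' x) :=
    pi_bern_singleton q (fun i => (hq0 i).le) (fun i => (hq1 i).le)
  have hac : P ≪ Q := by
    intro s hs
    have hse : s = ∅ := by
      by_contra h
      obtain ⟨x, hx⟩ := Set.nonempty_iff_ne_empty.2 h
      have h1 : Q {x} ≤ Q s := measure_mono (Set.singleton_subset_iff.2 hx)
      rw [hQ x, hs] at h1
      have h2 := hW'_pos x
      simp only [nonpos_iff_eq_zero, ENNReal.ofReal_eq_zero] at h1
      linarith
    simp [hse]
  set f : (ι → Bool) → ℝ≥0∞ := fun x => ENNReal.ofReal (W x / W' x) with hfdef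
  have hf : Measurable f := measurable_of_countable _
  have hwd : Q.withDensity f = P := by
    apply MeasureTheory.Measure.ext_of_singleton
    intro x
    rw [withDensity_apply _ (measurableSet_singleton x), lintegral_singleton, hQ, hP,
      ← ENNReal.ofReal_mul (div_nonneg (hW_pos x).le (hW'_pos x).le),
      div_mul_cancel₀ _ (ne_of_gt (hW'_pos x))]
  have hrn : P.rnDeriv Q =ᵐ[Q] f := by
    conv_lhs => rw [← hwd]
    exact Measure.rnDeriv_withDensity Q hf
  have hllr : llr P Q =ᵐ[P] fun x => log (W x / W' x) := by
    filter_upwards [hac.ae_le hrn] with x hx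
    simp only [llr_def]; rw [hx,
      ENNReal.toReal_ofReal (div_nonneg (hW_pos x).le (hW'_pos x).le)]
  have hInt : Integrable (llr P Q) P := Integrable.of_finite
  rw [klDiv, if_pos ⟨hac, hInt⟩]
  congr 1
  rw [integral_congr_ae hllr, integral_fintype Integrable.of_finite]
  simp_rw [measureReal_def, hP, ENNReal.toReal_ofReal (hW_pos _).le, smul_eq_mul]
  have := tensor_sum (fun i b => cond b (p i) (1 - p i)) (fun i b => cond b (q i) (1 - q i))
    (fun i b => by cases b
                   · simpa using by linarith [hp1 i]
                   · simpa using hp0 i)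
    (fun i b => by cases b
                   · simpa using by linarith [hq1 i]
                   · simpa using hq0 i)
    (fun i => by simp)
  simpa using this

/-- Two-sided local KL/Frobenius comparison for banded product
Bernoulli measures under the Poisson intensity link. -/
theorem klDiv_product_bernoulli_frobenius_bounds
    (n m : ℕ) (lb c0 C0 : ℝ) (hlb : 0 < lb) (hc0 : 0 < c0) (hc0C0 : c0 ≤ C0)
    (hband : C0 * lb ≤ 1 / 2)
    (Λ Λ' : Fin n → Fin m → ℝ)
    (hΛ : ∀ i j, Λ i j ∈ Set.Icc (c0 * lb) (C0 * lb))
    (hΛ' : ∀ i j, Λ' i j ∈ Set.Icc (c0 * lb) (C0 * lb)) :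
    ENNReal.ofReal ((Real.exp (-1) / (2 * C0 * lb)) * ∑ i, ∑ j, (Λ i j - Λ' i j) ^ 2)
        ≤ klDiv
            (Measure.pi fun ij : Fin n × Fin m => bern (1 - Real.exp (-Λ ij.1 ij.2)))
            (Measure.pi fun ij : Fin n × Fin m => bern (1 - Real.exp (-Λ' ij.1 ij.2)))
      ∧ klDiv
            (Measure.pi fun ij : Fin n × Fin m => bern (1 - Real.exp (-Λ ij.1 ij.2)))
            (Measure.pi fun ij : Fin n × Fin m => bern (1 - Real.exp (-Λ' ij.1 ij.2)))
          ≤ ENNReal.ofReal ((4 / (c0 * lb)) * ∑ i, ∑ j, (Λ i j - Λ' i j) ^ 2) := by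
  have ha0 : 0 < c0 * lb := mul_pos hc0 hlb
  have hΛpos : ∀ ij : Fin n × Fin m, 0 < Λ ij.1 ij.2 :=
    fun ij => lt_of_lt_of_le ha0 (hΛ ij.1 ij.2).1
  have hΛ'pos : ∀ ij : Fin n × Fin m, 0 < Λ' ij.1 ij.2 :=
    fun ij => lt_of_lt_of_le ha0 (hΛ' ij.1 ij.2).1
  have hexplt : ∀ ij : Fin n × Fin m, 0 < 1 - Real.exp (-Λ ij.1 ij.2) := by
    intro ij
    have : Real.exp (-Λ ij.1 ij.2) < Real.exp 0 := Real.exp_lt_exp.2 (by linarith [hΛpos ij])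
    simpa using this
  have hexplt' : ∀ ij : Fin n × Fin m, 0 < 1 - Real.exp (-Λ' ij.1 ij.2) := by
    intro ij
    have : Real.exp (-Λ' ij.1 ij.2) < Real.exp 0 := Real.exp_lt_exp.2 (by linarith [hΛ'pos ij])
    simpa using this
  have hkl := klDiv_pi_bern (fun ij : Fin n × Fin m => 1 - Real.exp (-Λ ij.1 ij.2))
    (fun ij : Fin n × Fin m => 1 - Real.exp (-Λ' ij.1 ij.2))
    (fun ij => hexplt ij)
    (fun ij => by have := Real.exp_pos (-Λ ij.1 ij.2); linarith)
    (fun ij => hexplt' ij)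
    (fun ij => by have := Real.exp_pos (-Λ' ij.1 ij.2); linarith)
  rw [hkl]
  have hterm : ∀ ij : Fin n × Fin m,
      Real.exp (-1) / (2 * (C0 * lb)) * (Λ ij.1 ij.2 - Λ' ij.1 ij.2) ^ 2 ≤
        ((1 - Real.exp (-Λ ij.1 ij.2))
            * log ((1 - Real.exp (-Λ ij.1 ij.2)) / (1 - Real.exp (-Λ' ij.1 ij.2)))
          + (1 - (1 - Real.exp (-Λ ij.1 ij.2)))
            * log ((1 - (1 - Real.exp (-Λ ij.1 ij.2))) / (1 - (1 - Real.exp (-Λ' ij.1 ij.2)))))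
      ∧ ((1 - Real.exp (-Λ ij.1 ij.2))
            * log ((1 - Real.exp (-Λ ij.1 ij.2)) / (1 - Real.exp (-Λ' ij.1 ij.2)))
          + (1 - (1 - Real.exp (-Λ ij.1 ij.2)))
            * log ((1 - (1 - Real.exp (-Λ ij.1 ij.2))) / (1 - (1 - Real.exp (-Λ' ij.1 ij.2)))))
          ≤ 4 / (c0 * lb) * (Λ ij.1 ij.2 - Λ' ij.1 ij.2) ^ 2 := by
    intro ij
    have h := scalar_kl_bounds (c0 * lb) (C0 * lb) (Λ ij.1 ij.2) (Λ' ij.1 ij.2)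
      ha0 hband (hΛ ij.1 ij.2) (hΛ' ij.1 ij.2)
    simpa only [sub_sub_cancel] using h
  have hsum_eq : ∀ c : ℝ, c * ∑ i, ∑ j, (Λ i j - Λ' i j) ^ 2
      = ∑ ij : Fin n × Fin m, c * (Λ ij.1 ij.2 - Λ' ij.1 ij.2) ^ 2 := by
    intro c
    rw [Fintype.sum_prod_type, Finset.mul_sum]
    exact Finset.sum_congr rfl fun i _ => Finset.mul_sum _ _ _
  constructor
  · apply ENNReal.ofReal_le_ofReal
    have hc : Real.exp (-1) / (2 * C0 * lb) = Real.exp (-1) / (2 * (C0 * lb)) := by ring_nf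
    rw [hc, hsum_eq]
    exact Finset.sum_le_sum fun ij _ => (hterm ij).1
  · apply ENNReal.ofReal_le_ofReal
    rw [hsum_eq]
    exact Finset.sum_le_sum fun ij _ => (hterm ij).2
end

section
/- Let n, m ∈ ℕ, λ̄ > 0, and 0 < c₁ ≤ C₁ with C₁·λ̄ ≤ 1/2. Let Λ* = (λ*_{ij}) ∈ ℝ^{n×m} have all entries in [c₁λ̄, C₁λ̄], and let Λ̂ = (λ̂_{ij}) ∈ ℝ^{n×m} have all entries in [c₁λ̄, C₁λ̄]. Then Σ_{i,j} KL( Bern(1 − exp(−λ*_{ij})) ‖ Bern(1 − exp(−λ̂_{ij})) ) ≤ (4 / (c₁·λ̄)) · Σ_{i,j} (λ*_{ij} − λ̂_{ij})². -/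
open Real

/-- KL divergence between two Bernoulli distributions with parameters `p` and `q`. -/
noncomputable def klBern (p q : ℝ) : ℝ :=
  p * Real.log (p / q) + (1 - p) * Real.log ((1 - p) / (1 - q))

lemma klBern_le_chi2 (p q : ℝ) (hp : 0 < p) (hp1 : p < 1) (hq : 0 < q) (hq1 : q < 1) :
    klBern p q ≤ (p - q) ^ 2 / (q * (1 - q)) := by
  have h1 : Real.log (p / q) ≤ p / q - 1 :=
    Real.log_le_sub_one_of_pos (div_pos hp hq)
  have h2 : Real.log ((1 - p) / (1 - q)) ≤ (1 - p) / (1 - q) - 1 :=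
    Real.log_le_sub_one_of_pos (div_pos (by linarith) (by linarith))
  have hq' : q ≠ 0 := ne_of_gt hq
  have h1q' : (1 : ℝ) - q ≠ 0 := by linarith
  have key : p * (p / q - 1) + (1 - p) * ((1 - p) / (1 - q) - 1)
      = (p - q) ^ 2 / (q * (1 - q)) := by
    field_simp
    ring
  calc klBern p q ≤ p * (p / q - 1) + (1 - p) * ((1 - p) / (1 - q) - 1) := by
        unfold klBern
        gcongr <;> linarith
    _ = (p - q) ^ 2 / (q * (1 - q)) := key

lemma exp_diff_le (x y : ℝ) (hx : 0 ≤ x) (hxy : x ≤ y) :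
    Real.exp (-x) - Real.exp (-y) ≤ y - x := by
  have h1 : Real.exp (-x) ≤ 1 := Real.exp_le_one_iff.mpr (by linarith)
  have h2 : 1 + (x - y) ≤ Real.exp (x - y) := by
    have := Real.add_one_le_exp (x - y); linarith
  have h3 : Real.exp (-x) * Real.exp (x - y) = Real.exp (-y) := by
    rw [← Real.exp_add]; ring_nf
  have h4 : 0 < Real.exp (-x) := Real.exp_pos _
  nlinarith [Real.exp_pos (x - y)]

lemma exp_diff_sq (x y : ℝ) (hx : 0 ≤ x) (hy : 0 ≤ y) :
    (Real.exp (-x) - Real.exp (-y)) ^ 2 ≤ (x - y) ^ 2 := by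
  rcases le_total x y with h | h
  · have h1 := exp_diff_le x y hx h
    have h2 : Real.exp (-x) - Real.exp (-y) ≥ 0 := by
      have := Real.exp_le_exp.mpr (show -y ≤ -x by linarith)
      linarith
    nlinarith
  · have h1 := exp_diff_le y x hy h
    have h2 : Real.exp (-y) - Real.exp (-x) ≥ 0 := by
      have := Real.exp_le_exp.mpr (show -x ≤ -y by linarith)
      linarith
    nlinarith

/-- Frobenius upper bound on the summed Bernoulli KL divergences under
the intensity link, for banded intensity matrices. -/
theorem sum_klBern_le_frobenius
    (n m : ℕ) (lb c1 C1 : ℝ) (hlb : 0 < lb) (hc1 : 0 < c1) (hc1C1 : c1 ≤ C1)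
    (hband : C1 * lb ≤ 1 / 2)
    (Λs Λh : Fin n → Fin m → ℝ)
    (hΛs : ∀ i j, Λs i j ∈ Set.Icc (c1 * lb) (C1 * lb))
    (hΛh : ∀ i j, Λh i j ∈ Set.Icc (c1 * lb) (C1 * lb)) :
    ∑ i, ∑ j, klBern (1 - Real.exp (-Λs i j)) (1 - Real.exp (-Λh i j))
      ≤ (4 / (c1 * lb)) * ∑ i, ∑ j, (Λs i j - Λh i j) ^ 2 := by
  set t := c1 * lb with ht_def
  have ht : 0 < t := by positivity
  have key : ∀ i j, klBern (1 - Real.exp (-Λs i j)) (1 - Real.exp (-Λh i j))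
      ≤ 4 / t * (Λs i j - Λh i j) ^ 2 := by
    intro i j
    obtain ⟨ha1, ha2⟩ := hΛs i j
    obtain ⟨hb1, hb2⟩ := hΛh i j
    set a := Λs i j
    set b := Λh i j
    have ha0 : 0 < a := lt_of_lt_of_le ht ha1
    have hb0 : 0 < b := lt_of_lt_of_le ht hb1
    have hahalf : a ≤ 1 / 2 := le_trans ha2 hband
    have hbhalf : b ≤ 1 / 2 := le_trans hb2 hband
    set p := 1 - Real.exp (-a) with hp_def
    set q := 1 - Real.exp (-b) with hq_def
    have hpexp : 0 < Real.exp (-a) := Real.exp_pos _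
    have hqexp : 0 < Real.exp (-b) := Real.exp_pos _
    have hp0 : 0 < p := by
      have : Real.exp (-a) < 1 := Real.exp_lt_one_iff.mpr (by linarith)
      simp only [hp_def]; linarith
    have hp1 : p < 1 := by simp only [hp_def]; linarith
    have hq0 : 0 < q := by
      have : Real.exp (-b) < 1 := Real.exp_lt_one_iff.mpr (by linarith)
      simp only [hq_def]; linarith
    have hq1 : q < 1 := by simp only [hq_def]; linarith
    have hkl := klBern_le_chi2 p q hp0 hp1 hq0 hq1
    have hnum : (p - q) ^ 2 ≤ (a - b) ^ 2 := by
      have := exp_diff_sq b a hb0.le ha0.le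
      have heq : p - q = Real.exp (-b) - Real.exp (-a) := by
        simp only [hp_def, hq_def]; ring
      rw [heq]; nlinarith
    have hden : t / 4 ≤ q * (1 - q) := by
      have hA : (1 + b) * Real.exp (-b) ≤ 1 := by
        have h1 : 1 + b ≤ Real.exp b := by
          have := Real.add_one_le_exp b; linarith
        have h2 : Real.exp b * Real.exp (-b) = 1 := by
          rw [← Real.exp_add]; simp
        nlinarith
      have hB : 1 - b ≤ Real.exp (-b) := by
        have := Real.add_one_le_exp (-b); linarith
      have h1q : 1 - q = Real.exp (-b) := by simp only [hq_def]; ring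
      rw [h1q]
      have hqb : q ≥ b * Real.exp (-b) := by
        simp only [hq_def]; nlinarith
      nlinarith
    have hdiv : (p - q) ^ 2 / (q * (1 - q)) ≤ (a - b) ^ 2 / (t / 4) :=
      div_le_div₀ (sq_nonneg _) hnum (by positivity) hden
    have heq2 : (a - b) ^ 2 / (t / 4) = 4 / t * (a - b) ^ 2 := by
      field_simp
    linarith [hkl, hdiv, heq2 ▸ hdiv]
  calc ∑ i, ∑ j, klBern (1 - Real.exp (-Λs i j)) (1 - Real.exp (-Λh i j))
      ≤ ∑ i, ∑ j, 4 / t * (Λs i j - Λh i j) ^ 2 := by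
        apply Finset.sum_le_sum; intro i _
        exact Finset.sum_le_sum fun j _ => key i j
    _ = 4 / t * ∑ i, ∑ j, (Λs i j - Λh i j) ^ 2 := by
        simp_rw [Finset.mul_sum]
end

section
/- Let 0 < c₀ ≤ C₀. There exist constants a₁ > 0 and a₂ > 0, depending only on c₀ and C₀, such that the following holds: for all n, m ∈ ℕ, all λ̄ > 0 with C₀·λ̄ ≤ 1/2, and all matrices Λ = (λ_{ij}), Λ' = (λ'_{ij}) ∈ ℝ^{n×m} with all entries in [c₀λ̄, C₀λ̄], setting p_{ij} = 1 − exp(−λ_{ij}) and p'_{ij} = 1 − exp(−λ'_{ij}), one has a₁ · Σ_{i,j} (λ_{ij} − λ'_{ij})² / λ̄ ≤ Σ_{i,j} ( 1 − √(p_{ij} p'_{ij}) − √((1 − p_{ij})(1 − p'_{ij})) ) ≤ a₂ · Σ_{i,j} (λ_{ij} − λ'_{ij})² / λ̄. -/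
open Real
set_option maxHeartbeats 800000

lemma exp_diff_bounds {a b : ℝ} (ha : 0 ≤ a) (hab : a ≤ b) (hb : b ≤ 1/2) :
    (b - a)/2 ≤ Real.exp (-a) - Real.exp (-b) ∧ Real.exp (-a) - Real.exp (-b) ≤ b - a := by
  have h1 := Real.add_one_le_exp (a - b)
  have h2 := Real.add_one_le_exp (b - a)
  have h3 : Real.exp (-a) * Real.exp (a - b) = Real.exp (-b) := by
    rw [← Real.exp_add]; ring_nf
  have h4 : Real.exp (-b) * Real.exp (b - a) = Real.exp (-a) := by
    rw [← Real.exp_add]; ring_nf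
  have h5 : Real.exp (-a) ≤ 1 := Real.exp_le_one_iff.2 (by linarith)
  have h6 : 1 - b ≤ Real.exp (-b) := by have := Real.add_one_le_exp (-b); linarith
  have h7 : (0:ℝ) < Real.exp (-b) := Real.exp_pos _
  have h8 : (0:ℝ) < Real.exp (-a) := Real.exp_pos _
  constructor
  · nlinarith [mul_le_mul_of_nonneg_left h2 h7.le]
  · nlinarith [mul_le_mul_of_nonneg_left h1 h8.le]

lemma sq_bounds {d e : ℝ} (he : 0 ≤ e) (l : e/2 ≤ d) (u : d ≤ e) :
    e^2/4 ≤ d^2 ∧ d^2 ≤ e^2 := by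
  constructor <;> nlinarith

lemma splus_ub {s s' a : ℝ} (h1 : s^2 ≤ a) (h2 : s'^2 ≤ a) : (s + s')^2 ≤ 4*a := by
  nlinarith [sq_nonneg (s - s')]

lemma splus_lb {s s' b : ℝ} (hs : 0 ≤ s) (hs' : 0 ≤ s') (h : b ≤ s^2 + s'^2) :
    b ≤ (s + s')^2 := by
  nlinarith [mul_nonneg hs hs']

lemma lower_alg {C0 lb S T D e : ℝ} (hC0 : 0 < C0) (hlb : 0 < lb)
    (hT : 0 ≤ T) (hd1 : e^2/4 ≤ D) (h1 : D ≤ S * (4*C0*lb)) :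
    1/(32*C0) * e^2 / lb ≤ (S + T)/2 := by
  rw [div_le_iff₀ hlb, show 1/(32*C0) * e^2 = e^2/(32*C0) from by ring,
    div_le_iff₀ (by positivity : (0:ℝ) < 32*C0)]
  nlinarith [mul_nonneg hT (mul_nonneg hlb.le hC0.le)]

lemma upper_alg {c0 C0 lb S T D e : ℝ} (hc0 : 0 < c0) (hcC : c0 ≤ C0) (hlb : 0 < lb)
    (hT : 0 ≤ T) (hd2 : D ≤ e^2) (h1 : S * (c0*lb) ≤ D) (h2 : T * (2*C0*lb) ≤ D) :
    (S + T)/2 ≤ 1/c0 * e^2 / lb := by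
  have he : 1/c0 * e^2 / lb = e^2 / (c0 * lb) := by
    field_simp
  rw [he, le_div_iff₀ (by positivity : (0:ℝ) < c0 * lb)]
  have h3 : T * (2*c0*lb) ≤ T * (2*C0*lb) := by
    apply mul_le_mul_of_nonneg_left _ hT
    nlinarith
  nlinarith

lemma key_term (c0 C0 lb x y : ℝ) (hc0 : 0 < c0) (hcC : c0 ≤ C0) (hlb : 0 < lb)
    (hhalf : C0 * lb ≤ 1/2)
    (hx1 : c0 * lb ≤ x) (hx2 : x ≤ C0 * lb) (hy1 : c0 * lb ≤ y) (hy2 : y ≤ C0 * lb) :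
    (1/(32*C0)) * (x - y)^2 / lb
      ≤ 1 - Real.sqrt ((1 - Real.exp (-x)) * (1 - Real.exp (-y)))
          - Real.sqrt ((1 - (1 - Real.exp (-x))) * (1 - (1 - Real.exp (-y)))) ∧
    1 - Real.sqrt ((1 - Real.exp (-x)) * (1 - Real.exp (-y)))
        - Real.sqrt ((1 - (1 - Real.exp (-x))) * (1 - (1 - Real.exp (-y))))
      ≤ (1/c0) * (x - y)^2 / lb := by
  have hx0 : 0 < x := lt_of_lt_of_le (by positivity) hx1
  have hy0 : 0 < y := lt_of_lt_of_le (by positivity) hy1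
  have hxh : x ≤ 1/2 := hx2.trans hhalf
  have hyh : y ≤ 1/2 := hy2.trans hhalf
  set p := 1 - Real.exp (-x) with hp
  set p' := 1 - Real.exp (-y) with hp'
  set q := Real.exp (-x) with hq
  set q' := Real.exp (-y) with hq'
  have hq1 : q ≤ 1 := Real.exp_le_one_iff.2 (by linarith)
  have hq1' : q' ≤ 1 := Real.exp_le_one_iff.2 (by linarith)
  have hqhalf : 1/2 ≤ q := by have := Real.add_one_le_exp (-x); simp only [hq]; linarith
  have hqhalf' : 1/2 ≤ q' := by have := Real.add_one_le_exp (-y); simp only [hq']; linarith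
  have hp0 : 0 ≤ p := by simp only [hp]; linarith
  have hp0' : 0 ≤ p' := by simp only [hp']; linarith
  have hpx : p ≤ x := by have := Real.add_one_le_exp (-x); simp only [hp]; linarith
  have hpy : p' ≤ y := by have := Real.add_one_le_exp (-y); simp only [hp']; linarith
  have hplow : x/2 ≤ p := by
    have h1 := Real.add_one_le_exp x
    have h2 : Real.exp (-x) * Real.exp x = 1 := by rw [← Real.exp_add]; simp
    have h3 := Real.exp_pos (-x)
    simp only [hp]
    nlinarith [mul_le_mul_of_nonneg_left h1 h3.le]
  have hplow' : y/2 ≤ p' := by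
    have h1 := Real.add_one_le_exp y
    have h2 : Real.exp (-y) * Real.exp y = 1 := by rw [← Real.exp_add]; simp
    have h3 := Real.exp_pos (-y)
    simp only [hp']
    nlinarith [mul_le_mul_of_nonneg_left h1 h3.le]
  have hdsq : (x - y)^2/4 ≤ (p - p')^2 ∧ (p - p')^2 ≤ (x - y)^2 := by
    rcases le_total y x with h | h
    · obtain ⟨l, u⟩ := exp_diff_bounds hy0.le h hxh
      have hpp : p - p' = Real.exp (-y) - Real.exp (-x) := by simp only [hp, hp']; ring
      exact sq_bounds (d := p - p') (e := x - y) (by linarith) (by linarith [hpp, l])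
        (by linarith [hpp, u])
    · obtain ⟨l, u⟩ := exp_diff_bounds hx0.le h hyh
      have hpp : p' - p = Real.exp (-x) - Real.exp (-y) := by simp only [hp, hp']; ring
      obtain ⟨b1, b2⟩ := sq_bounds (d := p' - p) (e := y - x) (by linarith)
        (by linarith [hpp, l]) (by linarith [hpp, u])
      constructor
      · calc (x - y)^2/4 = (y - x)^2/4 := by ring
          _ ≤ (p' - p)^2 := b1
          _ = (p - p')^2 := by ring
      · calc (p - p')^2 = (p' - p)^2 := by ring
          _ ≤ (y - x)^2 := b2
          _ = (x - y)^2 := by ring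
  obtain ⟨hd1, hd2⟩ := hdsq
  set s := Real.sqrt p with hs
  set s' := Real.sqrt p' with hs'
  set t := Real.sqrt q with ht
  set t' := Real.sqrt q' with ht'
  have hs2 : s^2 = p := Real.sq_sqrt hp0
  have hs2' : s'^2 = p' := Real.sq_sqrt hp0'
  have ht2 : t^2 = q := Real.sq_sqrt (Real.exp_pos _).le
  have ht2' : t'^2 = q' := Real.sq_sqrt (Real.exp_pos _).le
  have hsn : 0 ≤ s := Real.sqrt_nonneg _
  have hsn' : 0 ≤ s' := Real.sqrt_nonneg _
  have htn : 0 ≤ t := Real.sqrt_nonneg _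
  have htn' : 0 ≤ t' := Real.sqrt_nonneg _
  have hmul1 : Real.sqrt (p * p') = s * s' := Real.sqrt_mul hp0 _
  have hmul2 : Real.sqrt ((1 - p) * (1 - p')) = t * t' := by
    have h : (1 - p) * (1 - p') = q * q' := by simp only [hp, hp']; ring
    rw [h]; exact Real.sqrt_mul (Real.exp_pos _).le _
  have hpq : p + q = 1 := by simp only [hp, hq]; ring
  have hpq' : p' + q' = 1 := by simp only [hp', hq']; ring
  rw [hmul1, hmul2]
  have hid : 1 - s * s' - t * t' = ((s - s')^2 + (t - t')^2)/2 := by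
    linear_combination (-(hs2) - ht2 - hs2' - ht2' - hpq - hpq')/2
  rw [hid]
  have hfs : (p - p')^2 = (s - s')^2 * (s + s')^2 := by
    have h : p - p' = (s - s') * (s + s') := by linear_combination hs2' - hs2
    rw [h]; ring
  have hfq : (p - p')^2 = (t - t')^2 * (t + t')^2 := by
    have h : q - q' = (t - t') * (t + t') := by linear_combination ht2' - ht2
    have h2 : (p - p')^2 = (q - q')^2 := by simp only [hp, hp']; ring
    rw [h2, h]; ring
  have hsplus_ub : (s + s')^2 ≤ 4 * (C0 * lb) :=
    splus_ub (by rw [hs2]; linarith) (by rw [hs2']; linarith)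
  have hsplus_lb : c0 * lb ≤ (s + s')^2 :=
    splus_lb hsn hsn' (by rw [hs2, hs2']; linarith)
  have htplus_lb : 2 * C0 * lb ≤ (t + t')^2 :=
    splus_lb htn htn' (by rw [ht2, ht2']; linarith)
  constructor
  · refine lower_alg (D := (p - p')^2) (lt_of_lt_of_le hc0 hcC) hlb (sq_nonneg _) hd1 ?_
    rw [hfs]
    calc (s - s')^2 * (s + s')^2 ≤ (s - s')^2 * (4 * (C0 * lb)) :=
          mul_le_mul_of_nonneg_left hsplus_ub (sq_nonneg _)
      _ = (s - s')^2 * (4 * C0 * lb) := by ring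
  · refine upper_alg (D := (p - p')^2) hc0 hcC hlb (sq_nonneg _) hd2 ?_ ?_
    · rw [hfs]; exact mul_le_mul_of_nonneg_left hsplus_lb (sq_nonneg _)
    · rw [hfq]; exact mul_le_mul_of_nonneg_left htplus_lb (sq_nonneg _)

/-- Two-sided Hellinger/Frobenius comparison for banded intensity matrices
under the Poisson intensity link, with constants depending only on `c0, C0`. -/
theorem hellinger_frobenius_equivalence (c0 C0 : ℝ) (hc0 : 0 < c0) (hc0C0 : c0 ≤ C0) :
    ∃ a1 a2 : ℝ, 0 < a1 ∧ 0 < a2 ∧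
      ∀ (n m : ℕ) (lb : ℝ), 0 < lb → C0 * lb ≤ 1 / 2 →
        ∀ Λ Λ' : Fin n → Fin m → ℝ,
          (∀ i j, Λ i j ∈ Set.Icc (c0 * lb) (C0 * lb)) →
          (∀ i j, Λ' i j ∈ Set.Icc (c0 * lb) (C0 * lb)) →
          a1 * (∑ i, ∑ j, (Λ i j - Λ' i j) ^ 2) / lb
              ≤ (∑ i, ∑ j,
                  (1 - Real.sqrt ((1 - Real.exp (-Λ i j)) * (1 - Real.exp (-Λ' i j)))
                    - Real.sqrt ((1 - (1 - Real.exp (-Λ i j)))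
                        * (1 - (1 - Real.exp (-Λ' i j))))))
            ∧ (∑ i, ∑ j,
                  (1 - Real.sqrt ((1 - Real.exp (-Λ i j)) * (1 - Real.exp (-Λ' i j)))
                    - Real.sqrt ((1 - (1 - Real.exp (-Λ i j)))
                        * (1 - (1 - Real.exp (-Λ' i j))))))
                ≤ a2 * (∑ i, ∑ j, (Λ i j - Λ' i j) ^ 2) / lb := by
  have hC0 : 0 < C0 := lt_of_lt_of_le hc0 hc0C0
  refine ⟨1/(32*C0), 1/c0, by positivity, by positivity, ?_⟩
  intro n m lb hlb hhalf Λ Λ' hΛ hΛ'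
  have hrw : ∀ a : ℝ, a * (∑ i, ∑ j, (Λ i j - Λ' i j) ^ 2) / lb
      = ∑ i, ∑ j, a * (Λ i j - Λ' i j) ^ 2 / lb := by
    intro a
    rw [Finset.mul_sum, Finset.sum_div]
    congr 1; funext i
    rw [Finset.mul_sum, Finset.sum_div]
  constructor
  · rw [hrw]
    refine Finset.sum_le_sum fun i _ => Finset.sum_le_sum fun j _ => ?_
    exact (key_term c0 C0 lb (Λ i j) (Λ' i j) hc0 hc0C0 hlb hhalf
      (hΛ i j).1 (hΛ i j).2 (hΛ' i j).1 (hΛ' i j).2).1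
  · rw [hrw]
    refine Finset.sum_le_sum fun i _ => Finset.sum_le_sum fun j _ => ?_
    exact (key_term c0 C0 lb (Λ i j) (Λ' i j) hc0 hc0C0 hlb hhalf
      (hΛ i j).1 (hΛ i j).2 (hΛ' i j).1 (hΛ' i j).2).2
end

section
/- Let n, m ∈ ℕ, λ̄ > 0, and 0 < c₀ ≤ C₀ with C₀·λ̄ ≤ 1/2. Let Λ* = (λ*_{ij}) and Λ = (λ_{ij}) be matrices in ℝ^{n×m} all of whose entries lie in [c₀λ̄, C₀λ̄], and set p*_{ij} = 1 − exp(−λ*_{ij}) and p_{ij} = 1 − exp(−λ_{ij}). Then Σ_{i,j} log( 1 + (p*_{ij} − p_{ij})² / ( p_{ij}·(1 − p_{ij}) ) ) ≤ (8 / (c₀·λ̄)) · Σ_{i,j} (λ*_{ij} − λ_{ij})². -/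
open Real

lemma key_term_s14 (L a b : ℝ) (hL : 0 < L) (ha : L ≤ a) (hb : L ≤ b)
    (ha2 : a ≤ 1/2) (hb2 : b ≤ 1/2) :
    Real.log (1 + ((1 - Real.exp (-a)) - (1 - Real.exp (-b))) ^ 2
      / ((1 - Real.exp (-b)) * (1 - (1 - Real.exp (-b))))) ≤ 8 / L * (a - b) ^ 2 := by
  have hb0 : 0 < b := hL.trans_le hb
  have ha0 : 0 < a := hL.trans_le ha
  have hqb : Real.exp (-b) < 1 := by
    rw [Real.exp_lt_one_iff]; linarith
  have hq1 : 1 - b ≤ Real.exp (-b) := by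
    have := Real.add_one_le_exp (-b); linarith
  have hpb : b * Real.exp (-b) ≤ 1 - Real.exp (-b) := by
    have h := Real.add_one_le_exp b
    have hpos := Real.exp_pos (-b)
    have : (b + 1) * Real.exp (-b) ≤ Real.exp b * Real.exp (-b) := by
      apply mul_le_mul_of_nonneg_right h hpos.le
    rw [← Real.exp_add] at this
    simp at this
    nlinarith
  -- denominator lower bound
  have hD : L / 4 ≤ (1 - Real.exp (-b)) * Real.exp (-b) := by
    have h1 : b / 2 ≤ 1 - Real.exp (-b) := by nlinarith [Real.exp_pos (-b)]
    have h2 : (1:ℝ) / 2 ≤ Real.exp (-b) := by linarith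
    nlinarith
  have hDpos : 0 < (1 - Real.exp (-b)) * Real.exp (-b) := by
    have := Real.exp_pos (-b); nlinarith
  -- numerator bound
  have hN : ((1 - Real.exp (-a)) - (1 - Real.exp (-b))) ^ 2 ≤ (a - b) ^ 2 := by
    have key : ∀ x y : ℝ, 0 ≤ x → x ≤ y →
        Real.exp (-x) - Real.exp (-y) ≤ y - x := by
      intro x y hx hxy
      have h1 : 1 - Real.exp (-(y - x)) ≤ y - x := by
        have := Real.add_one_le_exp (-(y-x)); linarith
      have hex : Real.exp (-x) ≤ 1 := Real.exp_le_one_iff.mpr (by linarith)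
      have : Real.exp (-x) - Real.exp (-y) = Real.exp (-x) * (1 - Real.exp (-(y-x))) := by
        rw [mul_sub, mul_one, ← Real.exp_add]; ring_nf
      rw [this]
      calc Real.exp (-x) * (1 - Real.exp (-(y-x))) ≤ 1 * (y - x) := by
            apply mul_le_mul hex h1 (by have := Real.exp_le_one_iff.mpr (by linarith : -(y-x) ≤ 0); linarith) one_pos.le
        _ = y - x := one_mul _
    rcases le_total a b with h | h
    · have := key a b ha0.le h
      have h2 : 0 ≤ Real.exp (-a) - Real.exp (-b) := by
        have := Real.exp_le_exp.mpr (neg_le_neg h); linarith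
      nlinarith
    · have := key b a hb0.le h
      have h2 : 0 ≤ Real.exp (-b) - Real.exp (-a) := by
        have := Real.exp_le_exp.mpr (neg_le_neg h); linarith
      nlinarith
  have hfrac_nonneg : 0 ≤ ((1 - Real.exp (-a)) - (1 - Real.exp (-b))) ^ 2
      / ((1 - Real.exp (-b)) * (1 - (1 - Real.exp (-b)))) := by
    apply div_nonneg (sq_nonneg _)
    simp only [sub_sub_cancel]
    exact hDpos.le
  have hlog : Real.log (1 + ((1 - Real.exp (-a)) - (1 - Real.exp (-b))) ^ 2
      / ((1 - Real.exp (-b)) * (1 - (1 - Real.exp (-b)))))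
      ≤ ((1 - Real.exp (-a)) - (1 - Real.exp (-b))) ^ 2
      / ((1 - Real.exp (-b)) * (1 - (1 - Real.exp (-b)))) := by
    have := Real.log_le_sub_one_of_pos (by linarith : (0:ℝ) < 1 + _)
    linarith
  refine hlog.trans ?_
  simp only [sub_sub_cancel]
  calc ((1 - Real.exp (-a)) - (1 - Real.exp (-b))) ^ 2
        / ((1 - Real.exp (-b)) * Real.exp (-b))
      ≤ (a - b) ^ 2 / (L / 4) := by
        apply div_le_div₀ (sq_nonneg _) hN (by linarith) hD
    _ = 8 / L * (a - b) ^ 2 / 2 := by field_simp; ring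
    _ ≤ 8 / L * (a - b) ^ 2 := by
        have : 0 ≤ 8 / L * (a - b) ^ 2 := by positivity
        linarith

/-- Frobenius upper bound for the order-2 Rényi divergence
(sum of log(1 + χ²) terms) of banded product Bernoulli measures under the
Poisson intensity link. -/
theorem renyi2_le_frobenius
    (n m : ℕ) (lb c0 C0 : ℝ) (hlb : 0 < lb) (hc0 : 0 < c0) (hc0C0 : c0 ≤ C0)
    (hband : C0 * lb ≤ 1 / 2)
    (Λs Λ : Fin n → Fin m → ℝ)
    (hΛs : ∀ i j, Λs i j ∈ Set.Icc (c0 * lb) (C0 * lb))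
    (hΛ : ∀ i j, Λ i j ∈ Set.Icc (c0 * lb) (C0 * lb)) :
    ∑ i, ∑ j,
        Real.log (1 + ((1 - Real.exp (-Λs i j)) - (1 - Real.exp (-Λ i j))) ^ 2
          / ((1 - Real.exp (-Λ i j)) * (1 - (1 - Real.exp (-Λ i j)))))
      ≤ (8 / (c0 * lb)) * ∑ i, ∑ j, (Λs i j - Λ i j) ^ 2 := by
  rw [Finset.mul_sum]
  apply Finset.sum_le_sum
  intro i _
  rw [Finset.mul_sum]
  apply Finset.sum_le_sum
  intro j _
  have h1 := hΛs i j
  have h2 := hΛ i j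
  exact key_term_s14 (c0 * lb) (Λs i j) (Λ i j) (by positivity)
    h1.1 h2.1 (h1.2.trans hband) (h2.2.trans hband)
end
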